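/- Let A be a finite set of points in ℝ² that is not contained in a line, such that the rotation group of A about the center o_A of its smallest enclosing circle has order at least 2, and o_A ∉ A. Then for any point a ∈ A, the set B = (A ∪ {o_A}) \ {a} has trivial rotation group: the only rotation about the center o_B of the smallest enclosing circle of B that maps B onto itself is the identity. -/

import Mathlib

open Finset

/-- `o` is a center of a smallest enclosing circle of the finite set `S`:
it minimizes the maximal distance to the points of `S`. -/
def IsSECCenter (S : Finset ℂ) (o : ℂ) : Prop :=
  ∀ c : ℂ, sSup ((fun x => dist x o) '' (S : Set ℂ)) ≤ sSup ((fun x => dist x c) '' (S : Set ℂ))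

private lemma rot_moment (S : Finset ℂ) (o w : ℂ) (hw0 : w ≠ 0)
    (hS : S.image (fun x => o + w * (x - o)) = S) (m : ℕ) (hm : w ^ m ≠ 1) :
    ∑ x ∈ S, (x - o) ^ m = 0 := by
  have hinj : ∀ x ∈ S, ∀ y ∈ S, o + w * (x - o) = o + w * (y - o) → x = y := by
    intro x _ y _ h
    have h2 : w * (x - o) = w * (y - o) := by linear_combination h
    have := mul_left_cancel₀ hw0 h2
    linear_combination this
  have h1 : ∑ x ∈ S, (x - o) ^ m
      = ∑ x ∈ S.image (fun x => o + w * (x - o)), (x - o) ^ m := by rw [hS]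
  rw [Finset.sum_image hinj] at h1
  have h2 : ∑ x ∈ S, (o + w * (x - o) - o) ^ m = w ^ m * ∑ x ∈ S, (x - o) ^ m := by
    rw [Finset.mul_sum]
    exact Finset.sum_congr rfl fun x _ => by rw [add_sub_cancel_left, mul_pow]
  rw [h2] at h1
  have h3 : (1 - w ^ m) * ∑ x ∈ S, (x - o) ^ m = 0 := by linear_combination h1
  rcases mul_eq_zero.mp h3 with h | h
  · exact absurd (by linear_combination -h) hm
  · exact h

private lemma even_card_invol (g : ℂ → ℂ) (hinv : ∀ x, g (g x) = x) :
    ∀ S : Finset ℂ, (∀ x ∈ S, g x ∈ S) → (∀ x ∈ S, g x ≠ x) → Even S.card := by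
  intro S
  induction S using Finset.strongInduction with
  | _ S ih =>
    intro h1 h3
    rcases S.eq_empty_or_nonempty with rfl | ⟨x, hx⟩
    · simp
    · have hgx : g x ∈ S := h1 x hx
      have hxne : g x ≠ x := h3 x hx
      have hgxe : g x ∈ S.erase x := Finset.mem_erase.mpr ⟨hxne, hgx⟩
      set S' := (S.erase x).erase (g x) with hS'
      have hsub : S' ⊂ S :=
        (Finset.erase_subset _ _).trans_ssubset (Finset.erase_ssubset hx)
      have hmemS' : ∀ y, y ∈ S' ↔ y ≠ g x ∧ y ≠ x ∧ y ∈ S := by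
        intro y
        simp [hS', Finset.mem_erase, and_assoc]
      have hmem' : ∀ y ∈ S', g y ∈ S' := by
        intro y hy
        obtain ⟨hy1, hy2, hy3⟩ := (hmemS' y).mp hy
        refine (hmemS' (g y)).mpr ⟨?_, ?_, h1 y hy3⟩
        · intro h; apply hy2; have := congrArg g h; rwa [hinv, hinv] at this
        · intro h; apply hy1; have := congrArg g h; rwa [hinv] at this
      have hne' : ∀ y ∈ S', g y ≠ y := fun y hy => h3 y ((hmemS' y).mp hy).2.2
      have heven := ih S' hsub hmem' hne'
      have hcard : S.card = S'.card + 2 := by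
        have h4 : 1 ≤ (S.erase x).card := Finset.card_pos.mpr ⟨g x, hgxe⟩
        have h5 : 1 ≤ S.card := Finset.card_pos.mpr ⟨x, hx⟩
        have e1 : S'.card = (S.erase x).card - 1 := by
          rw [hS', Finset.card_erase_of_mem hgxe]
        have e2 : (S.erase x).card = S.card - 1 := Finset.card_erase_of_mem hx
        omega
      rw [hcard]
      exact heven.add even_two

/-- Replacing any point of a non-linear set `A` with nontrivial rotation group
(about the center `oA` of its smallest enclosing circle, with `oA ∉ A`) by `oA`
yields a set `B` whose rotation group about the center of its smallest
enclosing circle is trivial. -/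
theorem replacement_trivial_rotation_group
    (A : Finset ℂ) (oA : ℂ)
    (hline : ¬ Collinear ℝ (A : Set ℂ))
    (hoA : IsSECCenter A oA)
    (hrot : ∃ u : ℂ, ‖u‖ = 1 ∧ u ≠ 1 ∧
        A.image (fun x => oA + u * (x - oA)) = A)
    (hno : oA ∉ A)
    (a : ℂ) (ha : a ∈ A)
    (oB : ℂ) (hoB : IsSECCenter ((insert oA A).erase a) oB) :
    ∀ u : ℂ, ‖u‖ = 1 →
      ((insert oA A).erase a).image (fun x => oB + u * (x - oB)) = (insert oA A).erase a →
      u = 1 := by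
  intro u hu hBu
  by_contra hu1
  obtain ⟨v, hv1, hv1', hvA⟩ := hrot
  set B := (insert oA A).erase a with hBdef
  have hu0 : u ≠ 0 := fun h => by simp [h] at hu
  have hv0 : v ≠ 0 := fun h => by simp [h] at hv1
  have haoA : a ≠ oA := fun h => hno (h ▸ ha)
  have ha' : a ∈ insert oA A := Finset.mem_insert_of_mem ha
  set n := A.card with hn
  have hn3 : 3 ≤ n := by
    by_contra hcon
    push_neg at hcon
    apply hline
    interval_cases hA : n
    · rw [Finset.card_eq_zero] at hA
      rw [hA]; simpa using collinear_empty ℝ ℂ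
    · rw [Finset.card_eq_one] at hA
      obtain ⟨x, hx⟩ := hA
      rw [hx]; simpa using collinear_singleton ℝ x
    · rw [Finset.card_eq_two] at hA
      obtain ⟨x, y, _, hx⟩ := hA
      rw [hx]; simpa using collinear_pair ℝ x y
  have hcardB : B.card = n := by
    rw [hBdef, Finset.card_erase_of_mem ha', Finset.card_insert_of_notMem hno]
    omega
  have hsumB : ∀ f : ℂ → ℂ, ∑ x ∈ B, f x = f oA + ∑ x ∈ A, f x - f a := by
    intro f
    have h1 := Finset.sum_erase_add (insert oA A) f ha'
    rw [Finset.sum_insert hno] at h1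
    rw [hBdef]
    linear_combination h1
  have hPm : ∀ m, v ^ m ≠ 1 → ∑ x ∈ A, (x - oA) ^ m = 0 := rot_moment A oA v hv0 hvA
  have hQm : ∀ m, u ^ m ≠ 1 → ∑ x ∈ B, (x - oB) ^ m = 0 := rot_moment B oB u hu0 hBu
  set c := oA - oB with hcdef
  have hnc : (n : ℂ) ≠ 0 := Nat.cast_ne_zero.mpr (by omega)
  have hP1 : ∑ x ∈ A, (x - oA) = 0 := by
    have := hPm 1 (by simpa using hv1')
    simpa using this
  have hc : (n : ℂ) * c = a - oA := by
    have h1 := hQm 1 (by simpa using hu1)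
    rw [hsumB] at h1
    have h3 : ∑ x ∈ A, (x - oB) = ∑ x ∈ A, ((x - oA) + c) := by
      exact Finset.sum_congr rfl fun x _ => by rw [hcdef]; ring
    rw [Finset.sum_add_distrib, Finset.sum_const, nsmul_eq_mul, hP1] at h3
    simp only [pow_one] at h1
    rw [h3] at h1
    rw [hcdef]
    linear_combination h1
  have hc0 : c ≠ 0 := by
    intro h
    rw [h, mul_zero] at hc
    exact haoA (by linear_combination -hc)
  set P : ℕ → ℂ := fun i => ∑ x ∈ A, (x - oA) ^ i with hPdef
  have hP0 : P 0 = (n : ℂ) := by simp [hPdef, hn]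
  have hP1' : P 1 = 0 := by simpa [hPdef] using hP1
  have hE : ∀ m, u ^ m ≠ 1 →
      c ^ m + (∑ i ∈ Finset.range (m + 1), P i * (c ^ (m - i) * (m.choose i : ℂ)))
        = ((n : ℂ) + 1) ^ m * c ^ m := by
    intro m hm
    have h1 := hQm m hm
    rw [hsumB] at h1
    have ho2 : (oA - oB) ^ m = c ^ m := by rw [hcdef]
    have ha2 : (a - oB) ^ m = ((n : ℂ) + 1) ^ m * c ^ m := by
      rw [show a - oB = ((n : ℂ) + 1) * c by rw [hcdef]; rw [hcdef] at hc; linear_combination -hc,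
        mul_pow]
    have h3 : ∑ x ∈ A, (x - oB) ^ m
        = ∑ i ∈ Finset.range (m + 1), P i * (c ^ (m - i) * (m.choose i : ℂ)) := by
      have e1 : ∀ x ∈ A, (x - oB) ^ m
          = ∑ i ∈ Finset.range (m + 1), (x - oA) ^ i * (c ^ (m - i) * (m.choose i : ℂ)) := by
        intro x _
        rw [show x - oB = (x - oA) + c by rw [hcdef]; ring, add_pow]
        exact Finset.sum_congr rfl fun i _ => by ring
      rw [Finset.sum_congr rfl e1, Finset.sum_comm]
      exact Finset.sum_congr rfl fun i _ => by rw [← Finset.sum_mul]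
    rw [ho2, ha2, h3] at h1
    linear_combination h1
  -- helper to conclude a natural-number equation from a complex identity
  have hcast : ∀ m : ℕ, ∀ f g : ℕ → ℕ,
      ((f (n+1) : ℂ)) * c ^ m = ((g (n+1) : ℂ)) * c ^ m → f (n+1) = g (n+1) := by
    intro m f g h
    have h2 := mul_right_cancel₀ (pow_ne_zero m hc0) h
    exact_mod_cast h2
  by_cases hv2 : v ^ 2 = 1
  · -- v = -1
    have hv2' : v = -1 := by
      have h : (v - 1) * (v + 1) = 0 := by linear_combination hv2
      rcases mul_eq_zero.mp h with h | h
      · exact absurd (by linear_combination h) hv1'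
      · linear_combination h
    have hv3 : v ^ 3 ≠ 1 := by rw [pow_succ, hv2, one_mul]; exact hv1'
    have hP3 : P 3 = 0 := by simpa only [hPdef] using hPm 3 hv3
    -- A has even cardinality: x ↦ 2oA - x is a fixed-point-free involution on A
    have heven : Even n := by
      apply even_card_invol (fun x => 2 * oA - x) (fun x => by ring)
      · intro x hx
        have h1 : oA + v * (x - oA) ∈ A := by
          rw [← hvA]; exact Finset.mem_image_of_mem _ hx
        have h2 : oA + v * (x - oA) = 2 * oA - x := by rw [hv2']; ring
        rwa [h2] at h1
      · intro x hx h
        exact hno (by rw [show oA = x by linear_combination h/2]; exact hx)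
    by_cases hu2 : u ^ 2 = 1
    · -- chain case : u = -1, v = -1, use non-collinearity
      have hu2' : u = -1 := by
        have h : (u - 1) * (u + 1) = 0 := by linear_combination hu2
        rcases mul_eq_zero.mp h with h | h
        · exact absurd (by linear_combination h) hu1
        · linear_combination h
      have hBsub : B ⊆ insert oA A := by rw [hBdef]; exact Finset.erase_subset _ _
      have hoAB : oA ∈ B := by
        rw [hBdef]
        exact Finset.mem_erase.mpr ⟨haoA.symm, Finset.mem_insert_self _ _⟩
      have hAmem : ∀ x ∈ A, oA - (x - oA) ∈ A := by
        intro x hx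
        have h1 : oA + v * (x - oA) ∈ A := by
          rw [← hvA]; exact Finset.mem_image_of_mem _ hx
        have h2 : oA + v * (x - oA) = oA - (x - oA) := by rw [hv2']; ring
        rwa [h2] at h1
      have hBmem : ∀ x ∈ B, oB - (x - oB) ∈ B := by
        intro x hx
        have h1 : oB + u * (x - oB) ∈ B := by
          rw [← hBu]
          exact Finset.mem_image_of_mem _ hx
        have h2 : oB + u * (x - oB) = oB - (x - oB) := by rw [hu2']; ring
        rwa [h2] at h1
      set p : ℕ → ℂ := fun m => a - 2 * (m : ℂ) * c with hp
      have hstep : ∀ m : ℕ, m + 1 ≤ n → p m ∈ insert oA A → p (m + 1) ∈ B := by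
        intro m hm hpm
        have h1 : oA - (p m - oA) ∈ B := by
          rcases Finset.mem_insert.mp hpm with h | h
          · rw [h, show oA - (oA - oA) = oA from by ring]; exact hoAB
          · have h2 : oA - (p m - oA) ∈ A := hAmem _ h
            rw [hBdef]
            refine Finset.mem_erase.mpr ⟨?_, Finset.mem_insert_of_mem h2⟩
            intro hEq
            simp only [hp] at hEq
            have h3 : (2 * ((n : ℂ) - (m : ℂ))) * c = 0 := by
              linear_combination 2 * hc - hEq
            have h4 : (n : ℂ) = (m : ℂ) := by
              rcases mul_eq_zero.mp h3 with h5 | h5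
              · linear_combination h5 / 2
              · exact absurd h5 hc0
            have h6 : n = m := by exact_mod_cast h4
            omega
        have h2 := hBmem _ h1
        have h3 : oB - (oA - (p m - oA) - oB) = p (m + 1) := by
          simp only [hp]
          push_cast
          rw [hcdef]
          ring
        rwa [h3] at h2
      have hchain : ∀ m : ℕ, 1 ≤ m → m ≤ n → p m ∈ B := by
        intro m
        induction m with
        | zero => intro h _; exact absurd h (by norm_num)
        | succ k ih =>
          intro _ hk
          apply hstep k (by omega)
          rcases Nat.eq_zero_or_pos k with rfl | hkpos
          · have h : p 0 = a := by simp [hp]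
            rw [h]; exact ha'
          · exact hBsub (ih hkpos (by omega))
      have hpinj : Set.InjOn p ↑(Finset.Icc 1 n) := by
        intro x _ y _ hxy
        simp only [hp] at hxy
        have h2 : (2 * c) * (x : ℂ) = (2 * c) * (y : ℂ) := by linear_combination -hxy
        have h3 := mul_left_cancel₀ (mul_ne_zero two_ne_zero hc0) h2
        exact_mod_cast h3
      have himg : (Finset.Icc 1 n).image p = B := by
        apply Finset.eq_of_subset_of_card_le
        · intro x hx
          obtain ⟨m, hm, rfl⟩ := Finset.mem_image.mp hx
          obtain ⟨h1, h2⟩ := Finset.mem_Icc.mp hm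
          exact hchain m h1 h2
        · rw [Finset.card_image_of_injOn hpinj, Nat.card_Icc, hcardB]
          omega
      apply hline
      rw [collinear_iff_exists_forall_eq_smul_vadd]
      refine ⟨oA, a - oA, ?_⟩
      intro x hx
      rcases eq_or_ne x a with rfl | hxa
      · exact ⟨1, by rw [one_smul, vadd_eq_add]; ring⟩
      · have hxB : x ∈ B := by
          rw [hBdef]
          exact Finset.mem_erase.mpr ⟨hxa, Finset.mem_insert_of_mem (Finset.mem_coe.mp hx)⟩
        rw [← himg] at hxB
        obtain ⟨m, hm, rfl⟩ := Finset.mem_image.mp hxB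
        refine ⟨((n : ℝ) - 2 * m) / n, ?_⟩
        have hnR : (n : ℝ) ≠ 0 := Nat.cast_ne_zero.mpr (by omega)
        rw [Complex.real_smul, vadd_eq_add]
        simp only [hp]
        push_cast
        field_simp
        linear_combination (-(2:ℂ) * (m : ℂ)) * hc
    · by_cases hu3 : u ^ 3 = 1
      · -- C2 : v = -1, u of order 3
        have hv5 : v ^ 5 ≠ 1 := by
          rw [show (5 : ℕ) = 2 * 2 + 1 from rfl, pow_succ, pow_mul, hv2, one_pow, one_mul]
          exact hv1'
        have hu4 : u ^ 4 ≠ 1 := by rw [pow_succ, hu3, one_mul]; exact hu1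
        have hu5 : u ^ 5 ≠ 1 := by
          rw [show (5 : ℕ) = 3 + 2 from rfl, pow_add, hu3, one_mul]
          exact hu2
        have hP5 : P 5 = 0 := by simpa only [hPdef] using hPm 5 hv5
        have e2 := hE 2 hu2
        have e4 := hE 4 hu4
        have e5 := hE 5 hu5
        simp only [Finset.sum_range_succ, Finset.sum_range_zero] at e2 e4 e5
        norm_num [Nat.choose] at e2 e4 e5
        rw [hP0, hP1'] at e2
        rw [hP0, hP1', hP3] at e4
        rw [hP0, hP1', hP3, hP5] at e5
        have key : ((((n+1)^5 + 20*(n+1)^2 : ℕ)) : ℂ) * c ^ 5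
            = ((((5*(n+1)^4 + 16*(n+1)) : ℕ)) : ℂ) * c ^ 5 := by
          push_cast
          linear_combination -e5 + 5 * c * e4 - 20 * c ^ 3 * e2
        have key3 : (n+1)^5 + 20*(n+1)^2 = 5*(n+1)^4 + 16*(n+1) :=
          hcast 5 (fun k => k^5 + 20*k^2) (fun k => 5*k^4 + 16*k) key
        have h4 : 4 ≤ n := by
          rcases heven with ⟨t, ht⟩; omega
        have h5 : 5 * (n+1)^4 ≤ (n+1)^5 := by
          calc 5 * (n+1)^4 ≤ (n+1) * (n+1)^4 := Nat.mul_le_mul_right _ (by omega)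
            _ = (n+1)^5 := by ring
        nlinarith [key3, h4, h5]
      · -- C1 : v = -1, u^2 ≠ 1, u^3 ≠ 1
        have e2 := hE 2 hu2
        have e3 := hE 3 hu3
        simp only [Finset.sum_range_succ, Finset.sum_range_zero] at e2 e3
        norm_num [Nat.choose] at e2 e3
        rw [hP0, hP1'] at e2
        rw [hP0, hP1', hP3] at e3
        have key : ((((n+1)^3 + 2*(n+1) : ℕ)) : ℂ) * c ^ 3
            = (((3*(n+1)^2 : ℕ)) : ℂ) * c ^ 3 := by
          push_cast
          linear_combination -e3 + 3 * c * e2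
        have key3 : (n+1)^3 + 2*(n+1) = 3*(n+1)^2 :=
          hcast 3 (fun k => k^3 + 2*k) (fun k => 3*k^2) key
        nlinarith [key3, hn3]
  · by_cases hu2 : u ^ 2 = 1
    · have hu3 : u ^ 3 ≠ 1 := by rw [pow_succ, hu2, one_mul]; exact hu1
      have hP2 : P 2 = 0 := by simpa only [hPdef] using hPm 2 hv2
      by_cases hv3 : v ^ 3 = 1
      · -- B2 : v of order 3, u = -1
        have hv4 : v ^ 4 ≠ 1 := by rw [pow_succ, hv3, one_mul]; exact hv1'
        have hv5 : v ^ 5 ≠ 1 := by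
          rw [show (5 : ℕ) = 3 + 2 from rfl, pow_add, hv3, one_mul]
          exact hv2
        have hu5 : u ^ 5 ≠ 1 := by
          rw [show (5 : ℕ) = 2 * 2 + 1 from rfl, pow_succ, pow_mul, hu2, one_pow, one_mul]
          exact hu1
        have hP4 : P 4 = 0 := by simpa only [hPdef] using hPm 4 hv4
        have hP5 : P 5 = 0 := by simpa only [hPdef] using hPm 5 hv5
        have e3 := hE 3 hu3
        have e5 := hE 5 hu5
        simp only [Finset.sum_range_succ, Finset.sum_range_zero] at e3 e5
        norm_num [Nat.choose] at e3 e5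
        rw [hP0, hP1', hP2] at e3
        rw [hP0, hP1', hP2, hP4, hP5] at e5
        have key : ((((n+1)^5 + 9*(n+1) : ℕ)) : ℂ) * c ^ 5
            = (((10*(n+1)^3 : ℕ)) : ℂ) * c ^ 5 := by
          push_cast
          linear_combination -e5 + 10 * c ^ 2 * e3
        have key3 : (n+1)^5 + 9*(n+1) = 10*(n+1)^3 :=
          hcast 5 (fun k => k^5 + 9*k) (fun k => 10*k^3) key
        have h52 : 16 ≤ (n+1)^2 := by nlinarith [hn3]
        have h5 : 16 * (n+1)^3 ≤ (n+1)^5 := by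
          calc 16 * (n+1)^3 ≤ (n+1)^2 * (n+1)^3 := Nat.mul_le_mul_right _ h52
            _ = (n+1)^5 := by ring
        nlinarith [key3, h5, hn3]
      · -- A2 : v^2 ≠ 1, v^3 ≠ 1, u = -1
        have hP3 : P 3 = 0 := by simpa only [hPdef] using hPm 3 hv3
        have e3 := hE 3 hu3
        simp only [Finset.sum_range_succ, Finset.sum_range_zero] at e3
        norm_num [Nat.choose] at e3
        rw [hP0, hP1', hP2, hP3] at e3
        have key : ((((n+1) : ℕ)) : ℂ) * c ^ 3 = ((((n+1)^3 : ℕ)) : ℂ) * c ^ 3 := by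
          push_cast
          linear_combination e3
        have key3 : (n+1) = (n+1)^3 := hcast 3 (fun k => k) (fun k => k^3) key
        have h4 : 4 ≤ n + 1 := by omega
        have h16 : 16 ≤ (n+1)^2 := by nlinarith [h4]
        nlinarith [key3, h4, h16]
    · -- A1 : v^2 ≠ 1, u^2 ≠ 1
      have hP2 : P 2 = 0 := by simpa only [hPdef] using hPm 2 hv2
      have e2 := hE 2 hu2
      simp only [Finset.sum_range_succ, Finset.sum_range_zero] at e2
      norm_num [Nat.choose] at e2
      rw [hP0, hP1', hP2] at e2
      have key : ((((n+1) : ℕ)) : ℂ) * c ^ 2 = ((((n+1)^2 : ℕ)) : ℂ) * c ^ 2 := by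
        push_cast
        linear_combination e2
      have key3 : (n+1) = (n+1)^2 := hcast 2 (fun k => k) (fun k => k^2) key
      nlinarith [key3, hn3]
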